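/- The composition of two rational binary relations is rational: if R₁, R₂ ⊆ Σ* × Σ* are recognized by finite transducers, then R₁ ∘ R₂ = {(x,z) : ∃ y, (x,y) ∈ R₂ ∧ (y,z) ∈ R₁} is also recognized by a finite transducer. -/
import Mathlib


/-- A finite 2-tape transducer over the alphabet `A`: transitions are labeled by
pairs in `(A ∪ {ε}) × (A ∪ {ε})`, encoded via `Option A`. -/
structure Transducer (A : Type*) where
  Q : Type
  fin : Finite Q
  init : Set Q
  final : Set Q
  step : Q → Option A × Option A → Q → Prop

/-- A path of a transducer from state `p` to state `r`, reading `u` on the first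
tape and `v` on the second tape. -/
inductive Transducer.Path {A : Type*} (T : Transducer A) :
    T.Q → List A → List A → T.Q → Prop
  | nil (q : T.Q) : Transducer.Path T q [] [] q
  | cons {p q r : T.Q} {u v : List A} (a b : Option A) :
      T.step p (a, b) q → Transducer.Path T q u v r →
      Transducer.Path T p (a.toList ++ u) (b.toList ++ v) r

/-- The binary relation recognized by a transducer. -/
def Transducer.Rel {A : Type*} (T : Transducer A) (u v : List A) : Prop :=
  ∃ p ∈ T.init, ∃ q ∈ T.final, T.Path p u v q

/-- A binary relation on words is rational if it is recognized by a finite transducer. -/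
def IsRationalRel {A : Type*} (R : List A → List A → Prop) : Prop :=
  ∃ T : Transducer A, ∀ u v, T.Rel u v ↔ R u v

namespace CompAux

variable {A : Type*}

theorem path_append {T : Transducer A} {p q r : T.Q} {u v u' v' : List A}
    (h1 : T.Path p u v q) (h2 : T.Path q u' v' r) :
    T.Path p (u ++ u') (v ++ v') r := by
  induction h1 with
  | nil => simpa using h2
  | cons a b hs _ ih =>
    simpa [List.append_assoc] using Transducer.Path.cons a b hs (ih h2)

/-- The product transducer recognizing the composition. -/
def prod (T₁ T₂ : Transducer A) : Transducer A where
  Q := T₂.Q × T₁.Q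
  fin := by haveI := T₁.fin; haveI := T₂.fin; infer_instance
  init := {s | s.1 ∈ T₂.init ∧ s.2 ∈ T₁.init}
  final := {s | s.1 ∈ T₂.final ∧ s.2 ∈ T₁.final}
  step := fun s l t =>
    (∃ b, T₂.step s.1 (l.1, some b) t.1 ∧ T₁.step s.2 (some b, l.2) t.2) ∨
    (T₂.step s.1 (l.1, none) t.1 ∧ l.2 = none ∧ s.2 = t.2) ∨
    (T₁.step s.2 (none, l.2) t.2 ∧ l.1 = none ∧ s.1 = t.1)

variable {T₁ T₂ : Transducer A}

theorem liftLeft {p q : T₂.Q} {u v : List A} (h : T₂.Path p u v q) (hv : v = [])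
    (s : T₁.Q) : (prod T₁ T₂).Path (p, s) u [] (q, s) := by
  induction h with
  | nil => exact .nil _
  | @cons p q r u v a b hs h ih =>
    cases b with
    | some b => simp at hv
    | none =>
      simp only [Option.toList_none, List.nil_append] at hv
      have step : (prod T₁ T₂).step (p, s) (a, none) (q, s) :=
        Or.inr (Or.inl ⟨hs, rfl, rfl⟩)
      have := Transducer.Path.cons (T := prod T₁ T₂) a none step (ih hv)
      simpa using this

theorem decomp {p q : T₂.Q} {x w : List A} {c : A} {v : List A}
    (h : T₂.Path p x w q) (hw : w = c :: v) :
    ∃ x₁ a x₂ m m', x = x₁ ++ a.toList ++ x₂ ∧ T₂.Path p x₁ [] m ∧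
      T₂.step m (a, some c) m' ∧ T₂.Path m' x₂ v q := by
  induction h generalizing c v with
  | nil => simp at hw
  | cons a b hs h ih =>
    cases b with
    | some b =>
      obtain ⟨rfl, rfl⟩ : b = c ∧ _ = v := by simpa using hw
      exact ⟨[], a, _, _, _, by simp, .nil _, hs, h⟩
    | none =>
      simp only [Option.toList_none, List.nil_append] at hw
      obtain ⟨x₁, a', x₂, m, m', hx, h1, h2, h3⟩ := ih hw
      refine ⟨a.toList ++ x₁, a', x₂, m, m', by simp [hx], ?_, h2, h3⟩
      have := Transducer.Path.cons (T := T₂) a none hs h1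
      simpa using this

theorem comp_path {p₁ q₁ : T₁.Q} {y z : List A} (h1 : T₁.Path p₁ y z q₁) :
    ∀ {p₂ q₂ : T₂.Q} {x : List A}, T₂.Path p₂ x y q₂ →
      (prod T₁ T₂).Path (p₂, p₁) x z (q₂, q₁) := by
  induction h1 with
  | nil => intro p₂ q₂ x h2; exact liftLeft h2 rfl _
  | @cons p q r u v a b hs h ih =>
    intro p₂ q₂ x h2
    cases a with
    | none =>
      simp only [Option.toList_none, List.nil_append] at h2
      have step : (prod T₁ T₂).step (p₂, p) (none, b) (p₂, q) :=
        Or.inr (Or.inr ⟨hs, rfl, rfl⟩)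
      have := Transducer.Path.cons (T := prod T₁ T₂) none b step (ih h2)
      simpa using this
    | some c =>
      simp only [Option.toList_some, List.singleton_append] at h2
      obtain ⟨x₁, a', x₂, m, m', hx, hp1, hstep, hp2⟩ := decomp h2 rfl
      have step : (prod T₁ T₂).step (m, p) (a', b) (m', q) :=
        Or.inl ⟨c, hstep, hs⟩
      have tail := Transducer.Path.cons (T := prod T₁ T₂) a' b step (ih hp2)
      have := path_append (liftLeft hp1 rfl _) tail
      simpa [hx, List.append_assoc] using this

theorem prod_path {s t : (prod T₁ T₂).Q} {x z : List A}
    (h : (prod T₁ T₂).Path s x z t) :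
    ∃ y, T₂.Path s.1 x y t.1 ∧ T₁.Path s.2 y z t.2 := by
  induction h with
  | nil => exact ⟨[], .nil _, .nil _⟩
  | cons a c hs _ ih =>
    obtain ⟨y, hy2, hy1⟩ := ih
    rcases hs with ⟨b, h2, h1⟩ | ⟨h2, rfl, he⟩ | ⟨h1, rfl, he⟩
    · exact ⟨b :: y, Transducer.Path.cons a (some b) h2 hy2,
        Transducer.Path.cons (some b) c h1 hy1⟩
    · exact ⟨y, Transducer.Path.cons a none h2 hy2, he ▸ hy1⟩
    · exact ⟨y, he ▸ hy2, Transducer.Path.cons none c h1 hy1⟩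

end CompAux

/-- The composition of two rational binary relations is rational. -/
theorem rational_comp {A : Type*} (R₁ R₂ : List A → List A → Prop)
    (h₁ : IsRationalRel R₁) (h₂ : IsRationalRel R₂) :
    IsRationalRel (fun x z => ∃ y : List A, R₂ x y ∧ R₁ y z) := by
  obtain ⟨T₁, hT₁⟩ := h₁
  obtain ⟨T₂, hT₂⟩ := h₂
  refine ⟨CompAux.prod T₁ T₂, fun x z => ?_⟩
  constructor
  · rintro ⟨⟨p₂, p₁⟩, ⟨hp₂, hp₁⟩, ⟨q₂, q₁⟩, ⟨hq₂, hq₁⟩, hpath⟩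
    obtain ⟨y, hy2, hy1⟩ := CompAux.prod_path hpath
    exact ⟨y, (hT₂ x y).mp ⟨p₂, hp₂, q₂, hq₂, hy2⟩,
      (hT₁ y z).mp ⟨p₁, hp₁, q₁, hq₁, hy1⟩⟩
  · rintro ⟨y, hxy, hyz⟩
    obtain ⟨p₂, hp₂, q₂, hq₂, h2⟩ := (hT₂ x y).mpr hxy
    obtain ⟨p₁, hp₁, q₁, hq₁, h1⟩ := (hT₁ y z).mpr hyz
    exact ⟨(p₂, p₁), ⟨hp₂, hp₁⟩, (q₂, q₁), ⟨hq₂, hq₁⟩, CompAux.comp_path h1 h2⟩
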